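/- Let F : Sⁿ → ℝ ∪ {+∞} be the negative root-determinant function, F(X) = −(det X)^{1/n} for X positive semidefinite and F(X) = +∞ otherwise. Then for every real symmetric n×n matrix Y, the Fenchel conjugate F*(Y) = sup{Tr(XY) + (det X)^{1/n} : X ∈ Sⁿ positive semidefinite} satisfies: F*(Y) = 0 if −Y is positive semidefinite and (det(−Y))^{1/n} ≥ 1/n, and F*(Y) = +∞ otherwise. -/

import Mathlib

open Matrix Finset

variable {n : ℕ}

lemma aux_trace_eq_sum_eig {A : Matrix (Fin n) (Fin n) ℝ} (hA : A.IsHermitian) :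
    A.trace = ∑ i, hA.eigenvalues i := by
  conv_lhs => rw [hA.spectral_theorem]
  rw [Unitary.conjStarAlgAut_apply]
  rw [Matrix.trace_mul_cycle]
  rw [Unitary.coe_star_mul_self]
  simp [Matrix.trace_diagonal]

lemma aux_det_nonneg {A : Matrix (Fin n) (Fin n) ℝ} (hA : A.PosSemidef) :
    0 ≤ A.det := by
  rw [hA.isHermitian.det_eq_prod_eigenvalues]
  exact Finset.prod_nonneg fun i _ => hA.eigenvalues_nonneg i

lemma aux_amgm (hn : 0 < n) (f : Fin n → ℝ) (hf : ∀ i, 0 ≤ f i) :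
    (n : ℝ) * (∏ i, f i) ^ ((n : ℝ)⁻¹) ≤ ∑ i, f i := by
  have hn' : (n : ℝ) ≠ 0 := Nat.cast_ne_zero.2 hn.ne'
  have h := Real.geom_mean_le_arith_mean_weighted Finset.univ
      (fun _ : Fin n => (n : ℝ)⁻¹) f (fun i _ => by positivity)
      (by simp [Finset.card_univ, hn']) (fun i _ => hf i)
  rw [show (∏ i, f i ^ ((n:ℝ)⁻¹)) = (∏ i, f i) ^ ((n:ℝ)⁻¹) from
    (Real.finset_prod_rpow _ _ (fun i _ => hf i) _)] at h
  calc (n : ℝ) * (∏ i, f i) ^ ((n : ℝ)⁻¹)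
      ≤ (n : ℝ) * ∑ i, (n : ℝ)⁻¹ * f i := by
        apply mul_le_mul_of_nonneg_left h (by positivity)
    _ = ∑ i, f i := by
        rw [Finset.mul_sum]
        congr 1; ext i; field_simp

open scoped MatrixOrder in
lemma aux_key (hn : 0 < n) {X Z : Matrix (Fin n) (Fin n) ℝ}
    (hX : X.PosSemidef) (hZ : Z.PosSemidef) :
    (n : ℝ) * (X.det * Z.det) ^ ((n : ℝ)⁻¹) ≤ (X * Z).trace := by
  set S := CFC.sqrt X with hS
  have hSps : S.PosSemidef := (CFC.sqrt_nonneg X).posSemidef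
  have hM : (S * Z * S).PosSemidef := by
    have := hZ.mul_mul_conjTranspose_same S
    rwa [hSps.isHermitian.eq] at this
  have htr : (S * Z * S).trace = (X * Z).trace := by
    rw [Matrix.trace_mul_cycle]
    rw [show S * S * Z = X * Z by rw [CFC.sqrt_mul_sqrt_self X hX.nonneg]]
  have hdet : (S * Z * S).det = X.det * Z.det := by
    rw [Matrix.det_mul, Matrix.det_mul]
    have h2 : S.det * S.det = X.det := by rw [← Matrix.det_mul, CFC.sqrt_mul_sqrt_self X hX.nonneg]
    rw [← h2]; ring
  calc (n : ℝ) * (X.det * Z.det) ^ ((n : ℝ)⁻¹)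
      = (n : ℝ) * ((S * Z * S).det) ^ ((n : ℝ)⁻¹) := by rw [hdet]
    _ ≤ (S * Z * S).trace := by
        rw [hM.isHermitian.det_eq_prod_eigenvalues, aux_trace_eq_sum_eig hM.isHermitian]
        simpa using aux_amgm hn _ (fun i => hM.eigenvalues_nonneg i)
    _ = (X * Z).trace := htr

lemma aux_smul_psd {A : Matrix (Fin n) (Fin n) ℝ} (hA : A.PosSemidef) {t : ℝ}
    (ht : 0 ≤ t) : (t • A).PosSemidef := by
  refine .of_dotProduct_mulVec_nonneg ?_ (fun x => ?_)
  · show (t • A)ᴴ = t • A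
    rw [conjTranspose_smul, star_trivial, hA.isHermitian.eq]
  · rw [Matrix.smul_mulVec, dotProduct_smul, smul_eq_mul]
    exact mul_nonneg ht (hA.dotProduct_mulVec_nonneg x)

lemma aux_outer_psd (v : Fin n → ℝ) :
    ((replicateCol (Fin 1) v * replicateRow (Fin 1) v) : Matrix (Fin n) (Fin n) ℝ).PosSemidef := by
  have : (replicateCol (Fin 1) v * replicateRow (Fin 1) v : Matrix (Fin n) (Fin n) ℝ)
      = (replicateRow (Fin 1) v)ᴴ * replicateRow (Fin 1) v := by
    rw [conjTranspose_replicateRow]; simp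
  rw [this]
  exact posSemidef_conjTranspose_mul_self _

lemma aux_trace_outer (v : Fin n → ℝ) (Y : Matrix (Fin n) (Fin n) ℝ) :
    ((replicateCol (Fin 1) v * replicateRow (Fin 1) v) * Y).trace = v ⬝ᵥ (Y *ᵥ v) := by
  simp only [Matrix.trace, Matrix.diag, Matrix.mul_apply, Matrix.replicateCol_apply, Matrix.replicateRow_apply,
    dotProduct, Matrix.mulVec, Finset.sum_mul, Finset.mul_sum]
  rw [Finset.sum_comm]
  congr 1; ext i; congr 1; ext j
  simp [Finset.univ_unique]
  ring


/-- Let `F` be the negative root-determinant function,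
`F(X) = −(det X)^{1/n}` for `X` positive semidefinite and `+∞` otherwise. Then for
every real symmetric matrix `Y`, the Fenchel conjugate
`F*(Y) = sup {Tr(XY) + (det X)^{1/n} : X positive semidefinite}` equals `0` if
`−Y` is positive semidefinite and `(det(−Y))^{1/n} ≥ 1/n`, and `+∞` otherwise.
(The supremum is computed in `EReal`; `Matrix.PosSemidef` includes symmetry,
and `^` denotes the real power `Real.rpow`.) -/
theorem stmt15 {n : ℕ} (hn : 0 < n) (Y : Matrix (Fin n) (Fin n) ℝ)
    (hY : Y.IsHermitian) :
    (((-Y).PosSemidef ∧ (-Y).det ^ ((n : ℝ)⁻¹) ≥ 1 / (n : ℝ) →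
      (⨆ X : {X : Matrix (Fin n) (Fin n) ℝ // X.PosSemidef},
          (((X.1 * Y).trace + X.1.det ^ ((n : ℝ)⁻¹) : ℝ) : EReal)) = 0)) ∧
    (¬ ((-Y).PosSemidef ∧ (-Y).det ^ ((n : ℝ)⁻¹) ≥ 1 / (n : ℝ)) →
      (⨆ X : {X : Matrix (Fin n) (Fin n) ℝ // X.PosSemidef},
          (((X.1 * Y).trace + X.1.det ^ ((n : ℝ)⁻¹) : ℝ) : EReal)) = ⊤) := by
  have hn' : (n : ℝ) ≠ 0 := Nat.cast_ne_zero.2 hn.ne'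
  have hnpos : (0 : ℝ) < n := Nat.cast_pos.2 hn
  haveI : Nonempty (Fin n) := ⟨⟨0, hn⟩⟩
  constructor
  · rintro ⟨hZ, hd⟩
    apply le_antisymm
    · apply iSup_le
      rintro ⟨X, hX⟩
      rw [show (0 : EReal) = ((0 : ℝ) : EReal) from rfl, EReal.coe_le_coe_iff]
      have hkey := aux_key hn hX hZ
      have htr : (X * -Y).trace = -(X * Y).trace := by
        rw [Matrix.mul_neg, Matrix.trace_neg]
      rw [htr] at hkey
      have hmul : (X.det * (-Y).det) ^ ((n:ℝ)⁻¹)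
          = X.det ^ ((n:ℝ)⁻¹) * (-Y).det ^ ((n:ℝ)⁻¹) :=
        Real.mul_rpow (aux_det_nonneg hX) (aux_det_nonneg hZ)
      rw [hmul] at hkey
      have h1 : 0 ≤ X.det ^ ((n:ℝ)⁻¹) := Real.rpow_nonneg (aux_det_nonneg hX) _
      have h2 : X.det ^ ((n:ℝ)⁻¹) * (1 / (n:ℝ)) ≤
          X.det ^ ((n:ℝ)⁻¹) * (-Y).det ^ ((n:ℝ)⁻¹) :=
        mul_le_mul_of_nonneg_left hd h1
      have h3 : (n : ℝ) * (X.det ^ ((n:ℝ)⁻¹) * (1 / (n:ℝ))) = X.det ^ ((n:ℝ)⁻¹) := by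
        field_simp
      nlinarith [mul_le_mul_of_nonneg_left h2 hnpos.le]
    · refine le_trans ?_ (le_iSup _ (⟨0, Matrix.PosSemidef.zero⟩ :
        {X : Matrix (Fin n) (Fin n) ℝ // X.PosSemidef}))
      simp [Matrix.det_zero, Real.zero_rpow (inv_ne_zero hn')]
  · intro hcon
    rw [iSup_eq_top]
    have claim : ∀ C : ℝ, ∃ X : {X : Matrix (Fin n) (Fin n) ℝ // X.PosSemidef},
        C < (X.1 * Y).trace + X.1.det ^ ((n:ℝ)⁻¹) := by
      intro C
      by_cases hZ : (-Y).PosSemidef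
      · have hd : (-Y).det ^ ((n:ℝ)⁻¹) < 1 / (n:ℝ) :=
          lt_of_not_ge fun h => hcon ⟨hZ, h⟩
        by_cases hdet : (-Y).det = 0
        · -- singular case
          obtain ⟨v, hv0, hvZ⟩ := (Matrix.exists_mulVec_eq_zero_iff).2 hdet
          have hYv : Y *ᵥ v = 0 := by
            have : -(Y *ᵥ v) = 0 := by rwa [Matrix.neg_mulVec] at hvZ
            simpa using this
          have hsnn : 0 ≤ v ⬝ᵥ v := Finset.sum_nonneg fun i _ => mul_self_nonneg _
          have hs : 0 < v ⬝ᵥ v :=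
            hsnn.lt_of_ne fun h => hv0 (dotProduct_self_eq_zero.1 h.symm)
          set R : ℝ := max (C - Y.trace) 0 + 1 with hR
          have hR1 : (1:ℝ) ≤ R := by simp [hR, le_max_right]
          have hR0 : (0:ℝ) ≤ R := by linarith
          set t : ℝ := (R ^ n - 1) / (v ⬝ᵥ v) with htdef
          have ht : 0 ≤ t := by
            apply div_nonneg _ hsnn
            have : (1:ℝ) ≤ R ^ n := one_le_pow₀ hR1
            linarith
          refine ⟨⟨1 + t • (replicateCol (Fin 1) v * replicateRow (Fin 1) v),
            Matrix.PosSemidef.add Matrix.PosSemidef.one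
              (aux_smul_psd (aux_outer_psd v) ht)⟩, ?_⟩
          have htr : ((1 + t • (replicateCol (Fin 1) v * replicateRow (Fin 1) v)) * Y).trace = Y.trace := by
            rw [Matrix.add_mul, Matrix.one_mul, Matrix.trace_add, smul_mul_assoc,
              Matrix.trace_smul, aux_trace_outer, hYv]
            simp
          have hdet2 : (1 + t • (replicateCol (Fin 1) v * replicateRow (Fin 1) v)).det = R ^ n := by
            have hcr : t • (replicateCol (Fin 1) v * replicateRow (Fin 1) v)
                = replicateCol (Fin 1) (t • v) * replicateRow (Fin 1) v := by
              ext i j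
              simp only [Matrix.smul_apply, Matrix.mul_apply, Matrix.replicateCol_apply,
                Matrix.replicateRow_apply, Finset.univ_unique, Finset.sum_singleton,
                Pi.smul_apply, smul_eq_mul]
              ring
            have hdt : Matrix.det (1 + replicateCol (Fin 1) (t • v) * replicateRow (Fin 1) v :
                Matrix (Fin n) (Fin n) ℝ) = 1 + v ⬝ᵥ (t • v) := by
              erw [Matrix.det_one_add_replicateCol_mul_replicateRow (ι := Fin 1) (t • v) v]
            rw [hcr, hdt,
              dotProduct_smul, smul_eq_mul,
              htdef, div_mul_cancel₀ _ (ne_of_gt hs)]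
            ring
          rw [htr, hdet2, Real.pow_rpow_inv_natCast hR0 hn.ne']
          have hCR : C - Y.trace < R := by
            have := le_max_left (C - Y.trace) (0:ℝ)
            rw [hR]; linarith
          linarith
        · -- invertible case
          have hdpos : 0 < (-Y).det := lt_of_le_of_ne (aux_det_nonneg hZ) (Ne.symm hdet)
          set d : ℝ := (-Y).det ^ ((n:ℝ)⁻¹) with hdd
          have hd0 : 0 < d := Real.rpow_pos_of_pos hdpos _
          have hginv : (n : ℝ) < d⁻¹ := by
            have h1 : (1/(n:ℝ))⁻¹ < d⁻¹ := inv_strictAnti₀ hd0 hd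
            rw [one_div, inv_inv] at h1
            exact h1
          have hg : 0 < d⁻¹ - (n:ℝ) := by linarith
          set t : ℝ := (max C 0 + 1) / (d⁻¹ - n) with htdef
          have ht : 0 ≤ t := by
            apply div_nonneg _ hg.le
            have := le_max_right C (0:ℝ); linarith
          refine ⟨⟨t • (-Y)⁻¹, aux_smul_psd hZ.inv ht⟩, ?_⟩
          have hunit : IsUnit (-Y).det := hdpos.ne'.isUnit
          have hmulY : (-Y)⁻¹ * Y = -(1 : Matrix (Fin n) (Fin n) ℝ) := by
            have h1 : (-Y)⁻¹ * (-Y) = 1 := Matrix.nonsing_inv_mul _ hunit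
            calc (-Y)⁻¹ * Y = -((-Y)⁻¹ * (-Y)) := by
                  rw [Matrix.mul_neg, neg_neg]
              _ = -1 := by rw [h1]
          have htr : ((t • (-Y)⁻¹) * Y).trace = -(t * n) := by
            rw [smul_mul_assoc, Matrix.trace_smul, hmulY, Matrix.trace_neg,
              Matrix.trace_one]
            simp [smul_eq_mul]
          have hdet2 : ((t • (-Y)⁻¹)).det ^ ((n:ℝ)⁻¹) = t * d⁻¹ := by
            rw [Matrix.det_smul, Matrix.det_nonsing_inv, Ring.inverse_eq_inv',
              Fintype.card_fin]
            rw [Real.mul_rpow (pow_nonneg ht n) (inv_nonneg.2 hdpos.le),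
              Real.pow_rpow_inv_natCast ht hn.ne',
              Real.inv_rpow (aux_det_nonneg hZ), ← hdd]
          have hval : t * (d⁻¹ - n) = max C 0 + 1 := by
            rw [htdef, div_mul_cancel₀ _ (ne_of_gt hg)]
          have := le_max_left C (0:ℝ)
          rw [htr, hdet2]
          nlinarith
      · -- not PSD case
        have hq : ∃ v : Fin n → ℝ, 0 < v ⬝ᵥ (Y *ᵥ v) := by
          by_contra h
          push_neg at h
          refine hZ (.of_dotProduct_mulVec_nonneg hY.neg fun x => ?_)
          have hx := h x
          rw [star_trivial, Matrix.neg_mulVec, dotProduct_neg]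
          linarith
        obtain ⟨v, hc⟩ := hq
        set t : ℝ := (max C 0 + 1) / (v ⬝ᵥ (Y *ᵥ v)) with htdef
        have ht : 0 ≤ t := by
          apply div_nonneg _ hc.le
          have := le_max_right C (0:ℝ); linarith
        refine ⟨⟨t • (replicateCol (Fin 1) v * replicateRow (Fin 1) v),
          aux_smul_psd (aux_outer_psd v) ht⟩, ?_⟩
        have htr : ((t • (replicateCol (Fin 1) v * replicateRow (Fin 1) v)) * Y).trace = max C 0 + 1 := by
          rw [smul_mul_assoc, Matrix.trace_smul, aux_trace_outer, smul_eq_mul,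
            htdef, div_mul_cancel₀ _ (ne_of_gt hc)]
        have hdnn : 0 ≤ (t • (replicateCol (Fin 1) v * replicateRow (Fin 1) v)).det :=
          aux_det_nonneg (aux_smul_psd (aux_outer_psd v) ht)
        have hrnn : 0 ≤ (t • (replicateCol (Fin 1) v * replicateRow (Fin 1) v)).det ^ ((n:ℝ)⁻¹) :=
          Real.rpow_nonneg hdnn _
        have := le_max_left C (0:ℝ)
        rw [htr]
        linarith
    intro b hb
    induction b using EReal.rec with
    | bot =>
      obtain ⟨X, _⟩ := claim 0
      exact ⟨X, EReal.bot_lt_coe _⟩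
    | coe c =>
      obtain ⟨X, hX⟩ := claim c
      exact ⟨X, EReal.coe_lt_coe_iff.2 hX⟩
    | top => exact absurd hb (lt_irrefl _)
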